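/- For all moulds P, Q ∈ ARI, one has Darit(P)(dur(Q)) = dur(Darit(P)(Q)) + lu(Q,P). (This is the identity expressing that the derivation Darit(P) of ARI_lu extends to the extra generator a, taking the value P on a.) -/

import Mathlib

/-!
Moulds are modelled as families `P = (P_r)_{r ≥ 0}` of ℚ-valued functions of `r`
rational variables; identities of rational functions are expressed as pointwise
identities, guarded (where divisions genuinely occur) by the genericity
condition that all consecutive block sums of the variables are nonzero.
-/

/-- A mould: for each depth `r`, a function of `r` variables `u_1, …, u_r`. -/
abbrev Mould : Type := (r : ℕ) → (Fin r → ℚ) → ℚ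

namespace Mould

/-- Membership in `ARI`: vanishing constant term (depth-0 part equal to `0`). -/
def MemARI (P : Mould) : Prop := ∀ u : Fin 0 → ℚ, P 0 u = 0

/-- The first `i` letters of the word `u`. -/
def take {r : ℕ} (u : Fin r → ℚ) (i : ℕ) (h : i ≤ r) : Fin i → ℚ :=
  fun j => u ⟨j.1, by have := j.2; omega⟩

/-- The letters of the word `u` from position `i` on. -/
def drop {r : ℕ} (u : Fin r → ℚ) (i : ℕ) : Fin (r - i) → ℚ :=
  fun j => u ⟨i + j.1, by have := j.2; omega⟩

/-- Mould multiplication `mu`. -/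
def mu (P Q : Mould) : Mould := fun r u =>
  ∑ i : Fin (r + 1), P i.1 (take u i.1 (by have := i.2; omega)) * Q (r - i.1) (drop u i.1)

/-- The bracket `lu` associated to `mu`. -/
def lu (P Q : Mould) : Mould := fun r u => mu P Q r u - mu Q P r u

/-- `dur`: multiplication by `u_1 + ⋯ + u_r`. -/
def dur (P : Mould) : Mould := fun r u => (∑ j, u j) * P r u

/-- `dar`: multiplication by `u_1 ⋯ u_r`. -/
def dar (P : Mould) : Mould := fun r u => (∏ j, u j) * P r u

/-- `dur⁻¹`: division by `u_1 + ⋯ + u_r`. -/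
def durInv (P : Mould) : Mould := fun r u => P r u / (∑ j, u j)

/-- `dar⁻¹`: division by `u_1 ⋯ u_r`. -/
def darInv (P : Mould) : Mould := fun r u => P r u / (∏ j, u j)

/-- `Δ = dar ∘ dur`: multiplication by `u_1 ⋯ u_r (u_1 + ⋯ + u_r)`. -/
def delta (P : Mould) : Mould := dar (dur P)

/-- `Δ⁻¹`: division by `u_1 ⋯ u_r (u_1 + ⋯ + u_r)`. -/
def deltaInv (P : Mould) : Mould := darInv (durInv P)

/-- The word `a⌈c`, for the decomposition `a = (u_1,…,u_i)`, `b = (u_{i+1},…,u_k)`,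
`c = (u_{k+1},…,u_r)` (0-indexed: `a` = positions `< i`, `b` = positions `i..k-1`,
`c` = positions `k..r-1`): `a` followed by `c` with the sum of the letters of `b`
added to the first letter of `c`. -/
def flexUpper {r : ℕ} (u : Fin r → ℚ) (i k : ℕ) (hik : i < k) (hkr : k < r) :
    Fin (i + (r - k)) → ℚ := fun j =>
  if hj : j.1 < i then u ⟨j.1, by omega⟩
  else if hj2 : j.1 = i then ∑ m : Fin (k + 1 - i), u ⟨i + m.1, by have := m.2; omega⟩
  else u ⟨k + (j.1 - i), by have := j.2; omega⟩

/-- The word `a⌉c`: `a` with the sum of the letters of `b` added to its last letter,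
followed by `c`. -/
def flexLower {r : ℕ} (u : Fin r → ℚ) (i k : ℕ) (hi : 0 < i) (hik : i < k) (hkr : k ≤ r) :
    Fin (i + (r - k)) → ℚ := fun j =>
  if hj : j.1 < i - 1 then u ⟨j.1, by omega⟩
  else if hj2 : j.1 = i - 1 then
    ∑ m : Fin (k - (i - 1)), u ⟨(i - 1) + m.1, by have := m.2; omega⟩
  else u ⟨k + (j.1 - i), by have := j.2; omega⟩

/-- The middle word `b = (u_{i+1},…,u_k)` of a decomposition. -/
def blockWord {r : ℕ} (u : Fin r → ℚ) (i k : ℕ) (h : k ≤ r) : Fin (k - i) → ℚ :=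
  fun m => u ⟨i + m.1, by have := m.2; omega⟩

/-- Ecalle's derivation `arit(P)` applied to `M`:
`(arit(P)·M)(u) = Σ M(a⌈c)P(b) − Σ M(a⌉c)P(b)`, the first sum over decompositions
with `b, c` nonempty, the second over decompositions with `a, b` nonempty. -/
def arit (P M : Mould) : Mould := fun r u =>
  (∑ i : Fin (r + 1), ∑ k : Fin (r + 1),
    if h : i.1 < k.1 ∧ k.1 < r then
      M (i.1 + (r - k.1)) (flexUpper u i.1 k.1 h.1 h.2)
        * P (k.1 - i.1) (blockWord u i.1 k.1 (le_of_lt h.2))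
    else 0)
  - ∑ i : Fin (r + 1), ∑ k : Fin (r + 1),
    if h : 0 < i.1 ∧ i.1 < k.1 ∧ k.1 ≤ r then
      M (i.1 + (r - k.1)) (flexLower u i.1 k.1 h.1 h.2.1 h.2.2)
        * P (k.1 - i.1) (blockWord u i.1 k.1 h.2.2)
    else 0

/-- `Darit(P) = −dar ∘ (arit(Δ⁻¹(P)) − ad(Δ⁻¹(P))) ∘ dar⁻¹`, where `ad(X)·Y = lu(X,Y)`. -/
def Darit (P Q : Mould) : Mould := fun r u =>
  -(dar (fun s v => arit (deltaInv P) (darInv Q) s v - lu (deltaInv P) (darInv Q) s v) r u)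

/-- The `ari`-bracket: `ari(P,Q) = arit(Q)·P − arit(P)·Q + lu(P,Q)`. -/
def ari (P Q : Mould) : Mould := fun r u =>
  arit Q P r u - arit P Q r u + lu P Q r u

/-- The `Dari`-bracket: `Dari(P,Q) = Darit(P)·Q − Darit(Q)·P`. -/
def Dari (P Q : Mould) : Mould := fun r u => Darit P Q r u - Darit Q P r u

/-- The `push` operator: `push(P)(u_1,…,u_r) = P(−u_1−⋯−u_r, u_1,…,u_{r−1})`. -/
def push (P : Mould) : Mould := fun r u =>
  P r (fun j => if j.1 = 0 then -(∑ k, u k) else u ⟨j.1 - 1, by have := j.2; omega⟩)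

/-- The `swap` operator: `swap(P)(v_1,…,v_r) = P(v_r, v_{r−1}−v_r, …, v_1−v_2)`. -/
def swap (P : Mould) : Mould := fun r u =>
  P r (fun j =>
    if hj : j.1 = 0 then u ⟨r - 1, by have := j.2; omega⟩
    else u ⟨r - 1 - j.1, by have := j.2; omega⟩ - u ⟨r - j.1, by have := j.2; omega⟩)

/-- The mould `B = ma(b)` concentrated in depth 1, with `B(u_1) = 1`. -/
def Bm : Mould := fun r _ => if r = 1 then 1 else 0

/-- The mould `B₁ = ma([b,a])` concentrated in depth 1, with `B₁(u_1) = u_1`. -/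
def B1 : Mould := fun r u => if h : r = 1 then u ⟨0, by omega⟩ else 0

/-- A tuple of variables is *generic* when every consecutive block sum
`u_{i+1} + ⋯ + u_{j+1}` (`0 ≤ i ≤ j < r`) is nonzero; two rational-function
valued moulds are equal iff they agree at all generic tuples, and all
denominators occurring in the flexion operations are such block sums. -/
def Generic {r : ℕ} (u : Fin r → ℚ) : Prop :=
  ∀ (i j : ℕ) (_ : i ≤ j) (_ : j < r),
    (∑ m : Fin (j + 1 - i), u ⟨i + m.1, by have := m.2; omega⟩) ≠ 0

/-- A mould is polynomial-valued if each of its components is (the evaluation of)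
a polynomial. -/
def IsPolynomial (P : Mould) : Prop :=
  ∀ r : ℕ, ∃ p : MvPolynomial (Fin r) ℚ, ∀ u : Fin r → ℚ, P r u = MvPolynomial.eval u p

/-- The truncated word `(u_1,…,u_{r-1})`. -/
def init {r : ℕ} (u : Fin r → ℚ) : Fin (r - 1) → ℚ := take u (r - 1) (Nat.sub_le r 1)

/-- The shifted word `(u_2,…,u_r)`. -/
def tail {r : ℕ} (u : Fin r → ℚ) : Fin (r - 1) → ℚ := drop u 1

/-- The word `(u_2, …, u_{r−1}, −u_1−⋯−u_{r−1})`. -/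
def pushTail {r : ℕ} (u : Fin r → ℚ) : Fin (r - 1) → ℚ := fun j =>
  if j.1 = r - 2 then -(∑ m : Fin (r - 1), u ⟨m.1, by have := m.2; omega⟩)
  else u ⟨j.1 + 1, by have := j.2; omega⟩

/-! ### Auxiliary machinery for the proof -/

/-- Extension of a word to a function on all of `ℕ` (junk value `0` out of range). -/
def ext {r : ℕ} (u : Fin r → ℚ) : ℕ → ℚ := fun t => if h : t < r then u ⟨t, h⟩ else 0

lemma ext_eq {r : ℕ} (u : Fin r → ℚ) (t : ℕ) (h : t < r) : ext u t = u ⟨t, h⟩ := dif_pos h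

lemma sum_eq_range {n : ℕ} (g : Fin n → ℚ) (G : ℕ → ℚ) (h : ∀ j : Fin n, g j = G j.1) :
    ∑ j, g j = ∑ j ∈ Finset.range n, G j := by
  rw [← Fin.sum_univ_eq_sum_range]
  exact Finset.sum_congr rfl fun j _ => h j

lemma prod_eq_range {n : ℕ} (g : Fin n → ℚ) (G : ℕ → ℚ) (h : ∀ j : Fin n, g j = G j.1) :
    ∏ j, g j = ∏ j ∈ Finset.range n, G j := by
  rw [← Fin.prod_univ_eq_prod_range]
  exact Finset.prod_congr rfl fun j _ => h j

lemma sum_u {r : ℕ} (u : Fin r → ℚ) : ∑ j, u j = ∑ j ∈ Finset.range r, ext u j :=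
  sum_eq_range _ _ fun j => (ext_eq u j.1 j.2).symm

lemma prod_u {r : ℕ} (u : Fin r → ℚ) : ∏ j, u j = ∏ j ∈ Finset.range r, ext u j :=
  prod_eq_range _ _ fun j => (ext_eq u j.1 j.2).symm

lemma shifted_sum {r : ℕ} (u : Fin r → ℚ) (p q : ℕ) (hq : q ≤ r) :
    (∑ m : Fin (q - p), u ⟨p + m.1, by have := m.2; omega⟩) = ∑ m ∈ Finset.Ico p q, ext u m := by
  rw [sum_eq_range _ (fun t => ext u (p + t))
    (fun j => (ext_eq u (p + j.1) (by have := j.2; omega)).symm)]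
  rw [Finset.sum_Ico_eq_sum_range]

lemma take_sum {r : ℕ} (u : Fin r → ℚ) (i : ℕ) (h : i ≤ r) :
    ∑ j, take u i h j = ∑ j ∈ Finset.range i, ext u j :=
  sum_eq_range _ _ fun j => (ext_eq u j.1 (by have := j.2; omega)).symm

lemma drop_sum {r : ℕ} (u : Fin r → ℚ) (i : ℕ) (h : i ≤ r) :
    ∑ j, drop u i j = ∑ j ∈ Finset.Ico i r, ext u j :=
  shifted_sum u i r le_rfl

lemma take_prod {r : ℕ} (u : Fin r → ℚ) (i : ℕ) (h : i ≤ r) :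
    ∏ j, take u i h j = ∏ j ∈ Finset.range i, ext u j :=
  prod_eq_range _ _ fun j => (ext_eq u j.1 (by have := j.2; omega)).symm

lemma drop_prod {r : ℕ} (u : Fin r → ℚ) (i : ℕ) (h : i ≤ r) :
    ∏ j, drop u i j = ∏ j ∈ Finset.Ico i r, ext u j := by
  rw [prod_eq_range (drop u i) (fun t => ext u (i + t))
    (fun j => (ext_eq u (i + j.1) (by have := j.2; omega)).symm)]
  rw [Finset.prod_Ico_eq_prod_range]

lemma range_split_sum {r : ℕ} (u : Fin r → ℚ) (i : ℕ) (h : i ≤ r) :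
    (∑ j ∈ Finset.range i, ext u j) + ∑ j ∈ Finset.Ico i r, ext u j
      = ∑ j ∈ Finset.range r, ext u j := by
  rw [Finset.range_eq_Ico, Finset.range_eq_Ico]
  exact Finset.sum_Ico_consecutive (ext u) (Nat.zero_le i) h

lemma range_split_prod {r : ℕ} (u : Fin r → ℚ) (i : ℕ) (h : i ≤ r) :
    (∏ j ∈ Finset.range i, ext u j) * ∏ j ∈ Finset.Ico i r, ext u j
      = ∏ j ∈ Finset.range r, ext u j := by
  rw [Finset.range_eq_Ico, Finset.range_eq_Ico]
  exact Finset.prod_Ico_consecutive (ext u) (Nat.zero_le i) h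

lemma sum_glue {r : ℕ} (u : Fin r → ℚ) (p q n : ℕ) (hpq : p < q) (hqr : q ≤ r)
    (hn : n = p + (r - q) + 1) :
    (∑ j ∈ Finset.range n, (if j < p then ext u j
        else if j = p then ∑ m ∈ Finset.Ico p q, ext u m
        else ext u (q + (j - p - 1))))
      = ∑ j ∈ Finset.range r, ext u j := by
  subst hn
  set G : ℕ → ℚ := fun j => if j < p then ext u j
      else if j = p then ∑ m ∈ Finset.Ico p q, ext u m
      else ext u (q + (j - p - 1)) with hG
  have h1 : ∑ j ∈ Finset.Ico 0 p, G j = ∑ j ∈ Finset.Ico 0 p, ext u j :=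
    Finset.sum_congr rfl fun j hj => by
      simp only [Finset.mem_Ico] at hj
      simp only [hG, if_pos hj.2]
  have h2 : ∑ j ∈ Finset.Ico p (p + (r - q) + 1), G j
      = (∑ m ∈ Finset.Ico p q, ext u m) + ∑ j ∈ Finset.Ico q r, ext u j := by
    rw [Finset.sum_Ico_eq_sum_range]
    have hlen : p + (r - q) + 1 - p = (r - q) + 1 := by omega
    rw [hlen, Finset.sum_range_succ', add_comm]
    congr 1
    · simp [hG]
    · have : ∀ t ∈ Finset.range (r - q), G (p + (t + 1)) = ext u (q + t) := by
        intro t _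
        simp only [hG]
        rw [if_neg (by omega), if_neg (by omega)]
        congr 1
        omega
      rw [Finset.sum_congr rfl this, Finset.sum_Ico_eq_sum_range]
  calc ∑ j ∈ Finset.range (p + (r - q) + 1), G j
      = ∑ j ∈ Finset.Ico 0 p, G j + ∑ j ∈ Finset.Ico p (p + (r - q) + 1), G j := by
        rw [Finset.range_eq_Ico,
          ← Finset.sum_Ico_consecutive _ (Nat.zero_le p) (by omega : p ≤ p + (r - q) + 1)]
    _ = (∑ j ∈ Finset.Ico 0 p, ext u j)
          + ((∑ m ∈ Finset.Ico p q, ext u m) + ∑ j ∈ Finset.Ico q r, ext u j) := by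
        rw [h1, h2]
    _ = ∑ j ∈ Finset.range r, ext u j := by
        rw [Finset.sum_Ico_consecutive _ (le_of_lt hpq) hqr,
          Finset.sum_Ico_consecutive _ (Nat.zero_le p) (by omega : p ≤ r),
          ← Finset.range_eq_Ico]

lemma flexUpper_sum {r : ℕ} (u : Fin r → ℚ) (i k : ℕ) (hik : i < k) (hkr : k < r) :
    ∑ j, flexUpper u i k hik hkr j = ∑ j, u j := by
  rw [sum_u u, ← sum_glue u i (k + 1) (i + (r - k)) (by omega) (by omega) (by omega)]
  apply sum_eq_range
  intro j
  unfold flexUpper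
  by_cases hj : j.1 < i
  · rw [dif_pos hj, if_pos hj, ext_eq u j.1 (by omega)]
  · rw [dif_neg hj, if_neg hj]
    by_cases hj2 : j.1 = i
    · rw [dif_pos hj2, if_pos hj2]
      exact shifted_sum u i (k + 1) (by omega)
    · rw [dif_neg hj2, if_neg hj2,
        show k + 1 + (j.1 - i - 1) = k + (j.1 - i) from by omega]
      exact (ext_eq u (k + (j.1 - i)) (by have := j.2; omega)).symm

lemma flexLower_sum {r : ℕ} (u : Fin r → ℚ) (i k : ℕ) (hi : 0 < i) (hik : i < k) (hkr : k ≤ r) :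
    ∑ j, flexLower u i k hi hik hkr j = ∑ j, u j := by
  rw [sum_u u, ← sum_glue u (i - 1) k (i + (r - k)) (by omega) hkr (by omega)]
  apply sum_eq_range
  intro j
  unfold flexLower
  by_cases hj : j.1 < i - 1
  · rw [dif_pos hj, if_pos hj, ext_eq u j.1 (by omega)]
  · rw [dif_neg hj, if_neg hj]
    by_cases hj2 : j.1 = i - 1
    · rw [dif_pos hj2, if_pos hj2]
      exact shifted_sum u (i - 1) k hkr
    · rw [dif_neg hj2, if_neg hj2,
        show k + (j.1 - (i - 1) - 1) = k + (j.1 - i) from by omega]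
      exact (ext_eq u (k + (j.1 - i)) (by have := j.2; omega)).symm

lemma memARI_apply {R : Mould} (hR : MemARI R) {n : ℕ} (hn : n = 0) (v : Fin n → ℚ) :
    R n v = 0 := by subst hn; exact hR v

lemma generic_block {r : ℕ} {u : Fin r → ℚ} (hu : Generic u) (p q : ℕ)
    (hpq : p < q) (hqr : q ≤ r) : ∑ m ∈ Finset.Ico p q, ext u m ≠ 0 := by
  have h := hu p (q - 1) (by omega) (by omega)
  rw [shifted_sum u p (q - 1 + 1) (by omega)] at h
  rwa [show q - 1 + 1 = q from by omega] at h

lemma generic_ext_ne {r : ℕ} {u : Fin r → ℚ} (hu : Generic u) (t : ℕ) (ht : t < r) :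
    ext u t ≠ 0 := by
  have h := generic_block hu t (t + 1) (Nat.lt_succ_self t) ht
  rwa [Finset.sum_Ico_eq_sum_range, show t + 1 - t = 1 from by omega,
    Finset.sum_range_one, add_zero] at h

lemma generic_prod_range {r : ℕ} {u : Fin r → ℚ} (hu : Generic u) (i : ℕ) (h : i ≤ r) :
    ∏ j ∈ Finset.range i, ext u j ≠ 0 :=
  Finset.prod_ne_zero_iff.mpr fun t ht =>
    generic_ext_ne hu t (by have := Finset.mem_range.mp ht; omega)

lemma generic_prod_Ico {r : ℕ} {u : Fin r → ℚ} (hu : Generic u) (i : ℕ) :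
    ∏ j ∈ Finset.Ico i r, ext u j ≠ 0 :=
  Finset.prod_ne_zero_iff.mpr fun t ht =>
    generic_ext_ne hu t (by have := (Finset.mem_Ico.mp ht).2; omega)

lemma darInv_dur (Q : Mould) : darInv (dur Q) = dur (darInv Q) := by
  funext r u
  simp [darInv, dur, mul_div_assoc]

lemma arit_dur (X N : Mould) {r : ℕ} (u : Fin r → ℚ) :
    arit X (dur N) r u = (∑ j, u j) * arit X N r u := by
  simp only [arit, dur]
  rw [mul_sub, Finset.mul_sum, Finset.mul_sum]
  congr 1
  · refine Finset.sum_congr rfl fun i _ => ?_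
    rw [Finset.mul_sum]
    refine Finset.sum_congr rfl fun k _ => ?_
    by_cases h : i.1 < k.1 ∧ k.1 < r
    · rw [dif_pos h, dif_pos h, flexUpper_sum u i.1 k.1 h.1 h.2]
      ring
    · rw [dif_neg h, dif_neg h, mul_zero]
  · refine Finset.sum_congr rfl fun i _ => ?_
    rw [Finset.mul_sum]
    refine Finset.sum_congr rfl fun k _ => ?_
    by_cases h : 0 < i.1 ∧ i.1 < k.1 ∧ k.1 ≤ r
    · rw [dif_pos h, dif_pos h, flexLower_sum u i.1 k.1 h.1 h.2.1 h.2.2]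
      ring
    · rw [dif_neg h, dif_neg h, mul_zero]

lemma mu_dur_right (X N : Mould) {r : ℕ} (u : Fin r → ℚ) :
    mu X (dur N) r u = (∑ j, u j) * mu X N r u - mu (dur X) N r u := by
  simp only [mu, dur]
  rw [Finset.mul_sum, ← Finset.sum_sub_distrib]
  refine Finset.sum_congr rfl fun i _ => ?_
  have hi : i.1 ≤ r := by have := i.2; omega
  rw [sum_u u, take_sum u i.1, drop_sum u i.1 hi]
  have hd : ∑ j ∈ Finset.Ico i.1 r, ext u j
      = (∑ j ∈ Finset.range r, ext u j) - ∑ j ∈ Finset.range i.1, ext u j := by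
    have := range_split_sum u i.1 hi; linarith
  rw [hd]
  ring

lemma mu_dur_left (N X : Mould) {r : ℕ} (u : Fin r → ℚ) :
    mu (dur N) X r u = (∑ j, u j) * mu N X r u - mu N (dur X) r u := by
  simp only [mu, dur]
  rw [Finset.mul_sum, ← Finset.sum_sub_distrib]
  refine Finset.sum_congr rfl fun i _ => ?_
  have hi : i.1 ≤ r := by have := i.2; omega
  rw [sum_u u, take_sum u i.1, drop_sum u i.1 hi]
  have hd : ∑ j ∈ Finset.range i.1, ext u j
      = (∑ j ∈ Finset.range r, ext u j) - ∑ j ∈ Finset.Ico i.1 r, ext u j := by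
    have := range_split_sum u i.1 hi; linarith
  rw [hd]
  ring

lemma mu_key1 {r : ℕ} (P Q : Mould) (hP : MemARI P) (hQ : MemARI Q) (u : Fin r → ℚ)
    (hu : Generic u) :
    (∏ j, u j) * mu (dur (deltaInv P)) (darInv Q) r u = mu P Q r u := by
  simp only [mu, dur, deltaInv, darInv, durInv]
  rw [Finset.mul_sum]
  refine Finset.sum_congr rfl fun i _ => ?_
  have hi : i.1 ≤ r := by have := i.2; omega
  by_cases h0 : i.1 = 0
  · rw [memARI_apply hP h0]
    simp
  · rw [prod_u u, take_sum u i.1, take_prod u i.1 hi, drop_prod u i.1 hi,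
      ← range_split_prod u i.1 hi]
    have hT : (∑ j ∈ Finset.range i.1, ext u j) ≠ 0 := by
      rw [Finset.range_eq_Ico]
      exact generic_block hu 0 i.1 (by omega) hi
    have hA := generic_prod_range hu i.1 hi
    have hC := generic_prod_Ico hu i.1
    field_simp

lemma mu_key2 {r : ℕ} (P Q : Mould) (hP : MemARI P) (hQ : MemARI Q) (u : Fin r → ℚ)
    (hu : Generic u) :
    (∏ j, u j) * mu (darInv Q) (dur (deltaInv P)) r u = mu Q P r u := by
  simp only [mu, dur, deltaInv, darInv, durInv]
  rw [Finset.mul_sum]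
  refine Finset.sum_congr rfl fun i _ => ?_
  have hi : i.1 ≤ r := by have := i.2; omega
  by_cases hr : i.1 = r
  · rw [memARI_apply hP (show r - i.1 = 0 by omega)]
    simp
  · rw [prod_u u, take_prod u i.1 hi, drop_sum u i.1 hi, drop_prod u i.1 hi,
      ← range_split_prod u i.1 hi]
    have hT : (∑ j ∈ Finset.Ico i.1 r, ext u j) ≠ 0 :=
      generic_block hu i.1 r (by omega) le_rfl
    have hA := generic_prod_range hu i.1 hi
    have hC := generic_prod_Ico hu i.1
    field_simp

end Mould

open Mould in
/-- For all moulds `P, Q ∈ ARI`, one has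
`Darit(P)(dur(Q)) = dur(Darit(P)(Q)) + lu(Q,P)` (an equality of
rational-function valued moulds, i.e. an identity at every generic tuple).
This expresses that the derivation `Darit(P)` of `ARI_lu` extends to the extra
generator `a` (with `[Q,a] = dur(Q)`), taking the value `P` on `a`. -/
theorem Darit_extends_to_a (P Q : Mould) (hP : MemARI P) (hQ : MemARI Q) :
    ∀ (r : ℕ) (u : Fin r → ℚ), Generic u →
      Darit P (dur Q) r u = dur (Darit P Q) r u + lu Q P r u := by
  intro r u hu
  have e1 : darInv (dur Q) = dur (darInv Q) := darInv_dur Q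
  have hA := arit_dur (deltaInv P) (darInv Q) u
  have hL1 := mu_dur_right (deltaInv P) (darInv Q) u
  have hL2 := mu_dur_left (darInv Q) (deltaInv P) u
  have hK1 := mu_key1 P Q hP hQ u hu
  have hK2 := mu_key2 P Q hP hQ u hu
  have goal_eq : Darit P (dur Q) r u
      = -((∏ j, u j) * (arit (deltaInv P) (dur (darInv Q)) r u
          - (mu (deltaInv P) (dur (darInv Q)) r u - mu (dur (darInv Q)) (deltaInv P) r u))) := by
    simp only [Darit, dar, lu, e1]
  have rhs_eq : dur (Darit P Q) r u
      = (∑ j, u j) * -((∏ j, u j) * (arit (deltaInv P) (darInv Q) r u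
          - (mu (deltaInv P) (darInv Q) r u - mu (darInv Q) (deltaInv P) r u))) := by
    simp only [Darit, dar, dur, lu]
  have lhs2 : lu Q P r u = mu Q P r u - mu P Q r u := rfl
  rw [goal_eq, rhs_eq, lhs2, hA, hL1, hL2]
  linear_combination hK2 - hK1
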